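/- For every t ∈ ℝ \ Γ(1/8), there exists γ ∈ Γ(1/8) such that t − γ ∉ Z_{3/8} = { (2ℓ+1)·8^k/(4·3^k) : ℓ ∈ ℤ, k ≥ 1 }. That is, the orthogonal family {e_γ : γ ∈ Γ(1/8)} is maximally orthogonal in L²(μ_{3/8}). -/

import Mathlib

/-- The set `Γ(1/8)` of finite sums `∑ aₖ 8^k` with digits `aₖ ∈ {0,2}`. -/
def Gamma8 : Set ℝ :=
  {x | ∃ (N : ℕ) (a : ℕ → ℝ), (∀ k, a k = 0 ∨ a k = 2) ∧
    x = ∑ k ∈ Finset.range N, a k * 8 ^ k}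

/-- The zero set `Z_{3/8} = { (2ℓ+1) 8^k / (4 · 3^k) : ℓ ∈ ℤ, k ≥ 1 }`. -/
def Z38 : Set ℝ :=
  {t | ∃ (k : ℕ) (l : ℤ), 1 ≤ k ∧ t = (2 * l + 1) * 8 ^ k / (4 * 3 ^ k)}

/-- integer form of Z38 membership avoidance -/
def GoodInt (w : ℤ) : Prop := ∀ (k : ℕ) (n : ℤ), Odd n → w ≠ n * 2 ^ (3 * k + 1)

inductive IsG : ℤ → Prop
  | zero : IsG 0
  | step (d g : ℤ) (hd : d = 0 ∨ d = 2) (hg : IsG g) : IsG (d + 8 * g)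

lemma isG_two : IsG 2 := by
  have := IsG.step 2 0 (Or.inr rfl) IsG.zero
  simpa using this

lemma isG_real {g : ℤ} (h : IsG g) : (g : ℝ) ∈ Gamma8 := by
  induction h with
  | zero => exact ⟨0, fun _ => 0, fun k => Or.inl rfl, by simp⟩
  | step d g hd hg ih =>
    obtain ⟨N, a, ha, hsum⟩ := ih
    refine ⟨N + 1, fun k => if k = 0 then (d : ℝ) else a (k - 1), fun k => ?_, ?_⟩
    · cases k with
      | zero => simp only [if_pos rfl]; rcases hd with h | h <;> simp [h]
      | succ k => simpa using ha k
    · rw [Finset.sum_range_succ']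
      simp only [Nat.succ_ne_zero, if_false, if_pos rfl, Nat.add_sub_cancel]
      have : ∑ i ∈ Finset.range N, a i * 8 ^ (i + 1)
          = 8 * ∑ i ∈ Finset.range N, a i * 8 ^ i := by
        rw [Finset.mul_sum]; congr 1; ext i; ring
      rw [this, ← hsum]
      push_cast
      ring

lemma goodInt_zero : GoodInt 0 := by
  intro k n hn he
  have hne : (2:ℤ) ^ (3 * k + 1) ≠ 0 := pow_ne_zero _ two_ne_zero
  have : n = 0 := by
    rcases mul_eq_zero.mp he.symm with h | h
    · exact h
    · exact absurd h hne
  subst this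
  simp at hn

lemma goodInt_odd {u : ℤ} (h : Odd u) : GoodInt u := by
  intro k n hn he
  have : Even u := by
    rw [he]
    exact ⟨n * 2 ^ (3 * k), by rw [pow_succ]; ring⟩
  exact (Int.not_odd_iff_even.mpr this) h

lemma goodInt_mod4 {u : ℤ} (h : u % 8 = 4) : GoodInt u := by
  intro k n hn he
  cases k with
  | zero =>
    have hn2 := Int.odd_iff.mp hn
    simp only [Nat.mul_zero, Nat.zero_add, pow_one] at he
    omega
  | succ k =>
    have h8 : u = 8 * (n * 2 ^ (3 * k + 1)) := by
      rw [he, show 3 * (k + 1) + 1 = (3 * k + 1) + 3 by ring, pow_add]; ring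
    omega

lemma goodInt_mul8 {v : ℤ} (h : GoodInt v) : GoodInt (8 * v) := by
  intro k n hn he
  cases k with
  | zero =>
    have hn2 := Int.odd_iff.mp hn
    simp only [Nat.mul_zero, Nat.zero_add, pow_one] at he
    omega
  | succ k =>
    have h8 : 8 * v = 8 * (n * 2 ^ (3 * k + 1)) := by
      rw [he, show 3 * (k + 1) + 1 = (3 * k + 1) + 3 by ring, pow_add]; ring
    have : v = n * 2 ^ (3 * k + 1) := by omega
    exact h k n hn this

lemma key (c : ℤ) (hc : Odd c) (hc1 : 0 < c) (hc3 : c ≤ 3) :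
    ∀ (n : ℕ) (u : ℤ), u.natAbs ≤ n → ∃ g, IsG g ∧ GoodInt (u - c * g) := by
  have hc2 := Int.odd_iff.mp hc
  intro n
  induction n with
  | zero =>
    intro u hu
    have : u = 0 := by omega
    exact ⟨0, IsG.zero, by simpa [this] using goodInt_zero⟩
  | succ n ih =>
    intro u hu
    by_cases hodd : u % 2 = 1
    · exact ⟨0, IsG.zero, by simpa using goodInt_odd (Int.odd_iff.mpr hodd)⟩
    by_cases h4 : u % 8 = 4
    · exact ⟨0, IsG.zero, by simpa using goodInt_mod4 h4⟩
    by_cases h4' : (u - 2 * c) % 8 = 4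
    · refine ⟨2, isG_two, ?_⟩
      have : u - c * 2 = u - 2 * c := by ring
      rw [this]; exact goodInt_mod4 h4'
    by_cases hz : u = 0
    · exact ⟨0, IsG.zero, by simpa [hz] using goodInt_zero⟩
    have hsplit : u % 8 = 0 ∨ (u - 2 * c) % 8 = 0 := by omega
    rcases hsplit with h0 | h0
    · obtain ⟨v, hv⟩ : (8:ℤ) ∣ u := by omega
      have hvle : v.natAbs ≤ n := by omega
      obtain ⟨g', hg', hgood⟩ := ih v hvle
      refine ⟨0 + 8 * g', IsG.step 0 g' (Or.inl rfl) hg', ?_⟩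
      have : u - c * (0 + 8 * g') = 8 * (v - c * g') := by rw [hv]; ring
      rw [this]; exact goodInt_mul8 hgood
    · obtain ⟨v, hv⟩ : (8:ℤ) ∣ (u - 2 * c) := by omega
      have hvle : v.natAbs ≤ n := by omega
      obtain ⟨g', hg', hgood⟩ := ih v hvle
      refine ⟨2 + 8 * g', IsG.step 2 g' (Or.inr rfl) hg', ?_⟩
      have : u - c * (2 + 8 * g') = 8 * (v - c * g') := by
        have : u = 8 * v + 2 * c := by omega
        rw [this]; ring
      rw [this]; exact goodInt_mul8 hgood

lemma mem_Z38_int {w : ℤ} {j : ℕ} (h3 : j = 0 ∨ ¬ (3:ℤ) ∣ w)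
    (h : ((w : ℝ) / 3 ^ j) ∈ Z38) :
    ∃ (k' : ℕ) (m : ℤ), j ≤ k' + 1 ∧ Odd m ∧ w = m * 2 ^ (3 * k' + 1) := by
  obtain ⟨k, l, hk, heq⟩ := h
  obtain ⟨k', rfl⟩ : ∃ k', k = k' + 1 := ⟨k - 1, by omega⟩
  have h30 : ((3:ℝ) ^ j) ≠ 0 := by positivity
  have h40 : ((4:ℝ) * 3 ^ (k' + 1)) ≠ 0 := by positivity
  rw [div_eq_div_iff h30 h40] at heq
  have hz : w * (4 * 3 ^ (k' + 1)) = (2 * l + 1) * 8 ^ (k' + 1) * 3 ^ j := by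
    exact_mod_cast heq
  have h8 : (8:ℤ) ^ (k' + 1) = 2 ^ (3 * k' + 1) * 4 := by
    rw [show (8:ℤ) = 2 ^ 3 by norm_num, ← pow_mul,
      show 3 * (k' + 1) = (3 * k' + 1) + 2 by ring, pow_add]
    norm_num
  have hz2 : w * 3 ^ (k' + 1) = (2 * l + 1) * 2 ^ (3 * k' + 1) * 3 ^ j := by
    apply mul_right_cancel₀ (show (4:ℤ) ≠ 0 by norm_num)
    calc w * 3 ^ (k' + 1) * 4 = w * (4 * 3 ^ (k' + 1)) := by ring
      _ = (2 * l + 1) * 8 ^ (k' + 1) * 3 ^ j := hz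
      _ = (2 * l + 1) * 2 ^ (3 * k' + 1) * 3 ^ j * 4 := by rw [h8]; ring
  have h3ne : (3:ℤ) ≠ 0 := by norm_num
  have hjle : j ≤ k' + 1 := by
    by_contra hgt
    push_neg at hgt
    rcases h3 with h0 | h3
    · omega
    apply h3
    obtain ⟨r, hr⟩ : ∃ r, j = (k' + 1) + (r + 1) := ⟨j - k' - 2, by omega⟩
    have heq2 : w * 3 ^ (k' + 1)
        = ((2 * l + 1) * 2 ^ (3 * k' + 1) * 3 ^ r * 3) * 3 ^ (k' + 1) := by
      rw [hz2, hr, pow_add, pow_add]; ring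
    have hw : w = (2 * l + 1) * 2 ^ (3 * k' + 1) * 3 ^ r * 3 :=
      mul_right_cancel₀ (pow_ne_zero _ h3ne) heq2
    exact ⟨(2 * l + 1) * 2 ^ (3 * k' + 1) * 3 ^ r, by rw [hw]; ring⟩
  obtain ⟨s, hs⟩ : ∃ s, k' + 1 = j + s := ⟨k' + 1 - j, by omega⟩
  have hz3 : w * 3 ^ s = (2 * l + 1) * 2 ^ (3 * k' + 1) := by
    apply mul_right_cancel₀ (pow_ne_zero j h3ne)
    calc w * 3 ^ s * 3 ^ j = w * 3 ^ (k' + 1) := by rw [hs, pow_add]; ring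
      _ = (2 * l + 1) * 2 ^ (3 * k' + 1) * 3 ^ j := hz2
  have hcop : IsCoprime ((3:ℤ) ^ s) ((2:ℤ) ^ (3 * k' + 1)) := by
    apply IsCoprime.pow
    rw [Int.isCoprime_iff_gcd_eq_one]
    decide
  have hdvd : (3:ℤ) ^ s ∣ (2 * l + 1) :=
    hcop.dvd_of_dvd_mul_right ⟨w, by rw [← hz3]; ring⟩
  obtain ⟨m, hm⟩ := hdvd
  have hmodd : Odd m := by
    have hodd : Odd ((3:ℤ) ^ s * m) := by rw [← hm]; exact ⟨l, by ring⟩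
    exact (Int.odd_mul.mp hodd).2
  have hw : w = m * 2 ^ (3 * k' + 1) := by
    apply mul_right_cancel₀ (pow_ne_zero s h3ne)
    calc w * 3 ^ s = (2 * l + 1) * 2 ^ (3 * k' + 1) := hz3
      _ = m * 2 ^ (3 * k' + 1) * 3 ^ s := by rw [hm]; ring
  exact ⟨k', m, hjle, hmodd, hw⟩

lemma not_Z38_of_good {w : ℤ} {j : ℕ} (h3 : j = 0 ∨ ¬ (3:ℤ) ∣ w) (hg : GoodInt w) :
    ((w : ℝ) / 3 ^ j) ∉ Z38 := by
  intro hmem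
  obtain ⟨k', m, _, hm, hw⟩ := mem_Z38_int h3 hmem
  exact hg k' m hm hw

lemma not_Z38_of_mod4 {w : ℤ} {j : ℕ} (hj : 2 ≤ j) (h3 : ¬ (3:ℤ) ∣ w) (h4 : w % 4 ≠ 0) :
    ((w : ℝ) / 3 ^ j) ∉ Z38 := by
  intro hmem
  obtain ⟨k', m, hjle, hm, hw⟩ := mem_Z38_int (Or.inr h3) hmem
  obtain ⟨k'', rfl⟩ : ∃ k'', k' = k'' + 1 := ⟨k' - 1, by omega⟩
  have : w = m * 2 ^ (3 * k'' + 2) * 4 := by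
    rw [hw, show 3 * (k'' + 1) + 1 = (3 * k'' + 2) + 2 by ring, pow_add]; ring
  omega

theorem stmt16 (t : ℝ) (ht : t ∉ Gamma8) : ∃ γ ∈ Gamma8, t - γ ∉ Z38 := by
  classical
  by_cases hrat : ∃ (j : ℕ) (u : ℤ), t = (u : ℝ) / 3 ^ j
  · obtain ⟨u, hu⟩ := Nat.find_spec hrat
    set j₀ := Nat.find hrat with hj₀
    have h3u : j₀ = 0 ∨ ¬ (3:ℤ) ∣ u := by
      rcases Nat.eq_zero_or_pos j₀ with h0 | hpos
      · exact Or.inl h0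
      · refine Or.inr fun ⟨v, hv⟩ => ?_
        refine Nat.find_min hrat (m := j₀ - 1) (by omega) ⟨v, ?_⟩
        obtain ⟨i, hi⟩ : ∃ i, j₀ = i + 1 := ⟨j₀ - 1, by omega⟩
        rw [show j₀ - 1 = i by omega, hu, hv, hi]
        push_cast
        rw [pow_succ]
        field_simp
    match hj : j₀, h3u with
    | 0, _ =>
      obtain ⟨g, hg, hgood⟩ := key 1 ⟨0, by ring⟩ one_pos (by norm_num) u.natAbs u le_rfl
      refine ⟨(g : ℝ), isG_real hg, ?_⟩
      have hid : t - (g : ℝ) = ((u - 1 * g : ℤ) : ℝ) / 3 ^ (0:ℕ) := by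
        rw [hu]; push_cast; norm_num
      rw [hid]
      exact not_Z38_of_good (Or.inl rfl) hgood
    | 1, h3u' =>
      have h3 : ¬ (3:ℤ) ∣ u := h3u'.resolve_left (by norm_num)
      obtain ⟨g, hg, hgood⟩ := key 3 ⟨1, by ring⟩ (by norm_num) le_rfl u.natAbs u le_rfl
      refine ⟨(g : ℝ), isG_real hg, ?_⟩
      have hid : t - (g : ℝ) = ((u - 3 * g : ℤ) : ℝ) / 3 ^ (1:ℕ) := by
        rw [hu]; push_cast; field_simp
      rw [hid]
      refine not_Z38_of_good (Or.inr ?_) hgood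
      omega
    | (i + 2), h3u' =>
      have h3 : ¬ (3:ℤ) ∣ u := h3u'.resolve_left (by omega)
      have h3d : (3:ℤ) ∣ 3 ^ (i + 2) := dvd_pow_self 3 (by omega)
      have hodd3 : (3:ℤ) ^ (i + 2) % 2 = 1 := Int.odd_iff.mp (Odd.pow ⟨1, by ring⟩)
      by_cases hu4 : u % 4 = 0
      · refine ⟨(2 : ℝ), by exact_mod_cast isG_real isG_two, ?_⟩
        have hid : t - (2 : ℝ) = ((u - 3 ^ (i + 2) * 2 : ℤ) : ℝ) / 3 ^ (i + 2) := by
          rw [hu]; push_cast; field_simp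
        rw [hid]
        refine not_Z38_of_mod4 (by omega) (by omega) (by omega)
      · refine ⟨(0 : ℝ), by exact_mod_cast isG_real IsG.zero, ?_⟩
        have hid : t - (0 : ℝ) = ((u : ℤ) : ℝ) / 3 ^ (i + 2) := by
          rw [hu, sub_zero]
        rw [hid]
        exact not_Z38_of_mod4 (by omega) h3 hu4
  · refine ⟨(0 : ℝ), by exact_mod_cast isG_real IsG.zero, fun hmem => ?_⟩
    apply hrat
    rw [sub_zero] at hmem
    obtain ⟨k, l, hk, heq⟩ := hmem
    obtain ⟨k', rfl⟩ : ∃ k', k = k' + 1 := ⟨k - 1, by omega⟩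
    refine ⟨k' + 1, (2 * l + 1) * 2 ^ (3 * k' + 1), ?_⟩
    rw [heq]
    have h8 : (8:ℝ) ^ (k' + 1) = 2 ^ (3 * k' + 1) * 4 := by
      rw [show (8:ℝ) = 2 ^ 3 by norm_num, ← pow_mul,
        show 3 * (k' + 1) = (3 * k' + 1) + 2 by ring, pow_add]
      norm_num
    push_cast
    rw [h8]
    have h30 : ((3:ℝ) ^ (k' + 1)) ≠ 0 := by positivity
    field_simp
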